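/- Let f : ℝⁿ → ℝ be twice continuously differentiable with L₂-Lipschitz Hessian, let x ∈ ℝⁿ, g = ∇f(x), H = ∇²f(x), and T(s) = f(x) + gᵀs + (1/2)sᵀHs. Let σ > 0, r > 0 and s ∈ ℝⁿ with s ≠ 0 be such that T(0) − T(s) ≥ (1/2)σr‖s‖². Then the ratio ρ = (f(x) − f(x+s))/(T(0) − T(s)) satisfies |ρ − 1| ≤ L₂‖s‖/(3σr). -/

import Mathlib

open RealInnerProductSpace Set

/-- For `f` twice continuously differentiable with `L₂`-Lipschitz Hessian, if the step `s ≠ 0`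
satisfies the Taylor decrease `T(0) - T(s) ≥ (1/2)σr‖s‖²`, then the acceptance ratio
`ρ = (f(x) - f(x+s))/(T(0) - T(s))` satisfies `|ρ - 1| ≤ L₂‖s‖/(3σr)`. -/
theorem ratio_bound_regularized_newton
    (n : ℕ) (f : EuclideanSpace ℝ (Fin n) → ℝ) (L₂ : ℝ) (hL₂ : 0 < L₂)
    (hf : ContDiff ℝ 2 f)
    (hLip : ∀ y z : EuclideanSpace ℝ (Fin n),
      ‖fderiv ℝ (gradient f) y - fderiv ℝ (gradient f) z‖ ≤ L₂ * ‖y - z‖)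
    (x : EuclideanSpace ℝ (Fin n))
    (T : EuclideanSpace ℝ (Fin n) → ℝ)
    (hT : ∀ s : EuclideanSpace ℝ (Fin n),
      T s = f x + ⟪gradient f x, s⟫ + (1 / 2) * ⟪s, fderiv ℝ (gradient f) x s⟫)
    (σ r : ℝ) (hσ : 0 < σ) (hr : 0 < r)
    (s : EuclideanSpace ℝ (Fin n)) (hs : s ≠ 0)
    (hdec : T 0 - T s ≥ (1 / 2) * σ * r * ‖s‖ ^ 2) :
    |(f x - f (x + s)) / (T 0 - T s) - 1| ≤ L₂ * ‖s‖ / (3 * σ * r) := by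
  have hfd : Differentiable ℝ f := hf.differentiable (by norm_num)
  have hgrad_cd : ContDiff ℝ 1 (gradient f) := by
    have h1 : ContDiff ℝ 1 (fderiv ℝ f) := hf.fderiv_right (by norm_num)
    exact ((InnerProductSpace.toDual ℝ (EuclideanSpace ℝ (Fin n))).symm.contDiff).comp h1
  have hgrad_diff : Differentiable ℝ (gradient f) := hgrad_cd.differentiable (by norm_num)
  set H := fderiv ℝ (gradient f) x with hHdef
  set G : ℝ → EuclideanSpace ℝ (Fin n) := fun t => gradient f (x + t • s) with hGdef
  have hcurve : ∀ t : ℝ, HasDerivAt (fun t : ℝ => x + t • s) s t := by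
    intro t
    simpa using ((hasDerivAt_id t).smul_const s).const_add x
  have hφ' : ∀ t : ℝ, HasDerivAt (fun t : ℝ => f (x + t • s)) ⟪G t, s⟫ t := by
    intro t
    have h1 : HasFDerivAt f ((InnerProductSpace.toDual ℝ (EuclideanSpace ℝ (Fin n)))
        (gradient f (x + t • s))) (x + t • s) :=
      (hfd _).hasGradientAt.hasFDerivAt
    have := h1.comp_hasDerivAt t (hcurve t)
    exact this.congr_deriv (by simp [hGdef])
  have hG' : ∀ t : ℝ, HasDerivAt G ((fderiv ℝ (gradient f) (x + t • s)) s) t := by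
    intro t
    exact (hgrad_diff _).hasFDerivAt.comp_hasDerivAt t (hcurve t)
  -- step 1: bound on w t = G t - G 0 - t • H s
  set w : ℝ → EuclideanSpace ℝ (Fin n) := fun t => G t - G 0 - t • (H s) with hwdef
  have hw' : ∀ t : ℝ, HasDerivAt w ((fderiv ℝ (gradient f) (x + t • s)) s - H s) t := by
    intro t
    have := ((hG' t).sub_const (G 0)).sub ((hasDerivAt_id t).smul_const (H s))
    exact this.congr_deriv (by rw [one_smul])
  have hwbound : ∀ t ∈ Icc (0:ℝ) 1, ‖w t‖ ≤ L₂ * ‖s‖ ^ 2 * t ^ 2 / 2 := by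
    have hB : ∀ t : ℝ, HasDerivAt (fun t => L₂ * ‖s‖ ^ 2 * t ^ 2 / 2) (L₂ * ‖s‖ ^ 2 * t) t := by
      intro t
      have := ((hasDerivAt_pow 2 t).const_mul (L₂ * ‖s‖ ^ 2)).div_const 2
      exact this.congr_deriv (by norm_num; ring)
    have h0 : ‖w 0‖ ≤ L₂ * ‖s‖ ^ 2 * (0:ℝ) ^ 2 / 2 := by simp [hwdef]
    have bound : ∀ t ∈ Ico (0:ℝ) 1, ‖(fderiv ℝ (gradient f) (x + t • s)) s - H s‖
        ≤ L₂ * ‖s‖ ^ 2 * t := by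
      intro t ht
      have h1 : ‖(fderiv ℝ (gradient f) (x + t • s) - H) s‖
          ≤ ‖fderiv ℝ (gradient f) (x + t • s) - H‖ * ‖s‖ :=
        ContinuousLinearMap.le_opNorm _ s
      rw [ContinuousLinearMap.sub_apply] at h1
      have h2 : ‖fderiv ℝ (gradient f) (x + t • s) - H‖ ≤ L₂ * (t * ‖s‖) := by
        have h4 := hLip (x + t • s) x
        have h3 : x + t • s - x = t • s := by abel
        rw [h3, norm_smul, Real.norm_eq_abs, abs_of_nonneg ht.1] at h4
        exact h4
      calc ‖(fderiv ℝ (gradient f) (x + t • s)) s - H s‖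
          ≤ L₂ * (t * ‖s‖) * ‖s‖ :=
            h1.trans (mul_le_mul_of_nonneg_right h2 (norm_nonneg s))
        _ = L₂ * ‖s‖ ^ 2 * t := by ring
    exact fun t ht => image_norm_le_of_norm_deriv_right_le_deriv_boundary
      (fun u _ => (hw' u).continuousAt.continuousWithinAt)
      (fun u _ => (hw' u).hasDerivWithinAt) h0 hB bound ht
  -- step 2: bound on e t
  set e : ℝ → ℝ := fun t => f (x + t • s) - f x - t * ⟪G 0, s⟫ - t ^ 2 / 2 * ⟪H s, s⟫ with hedef
  have he' : ∀ t : ℝ, HasDerivAt e (⟪w t, s⟫) t := by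
    intro t
    have h1 : HasDerivAt e (⟪G t, s⟫ - ⟪G 0, s⟫ - t * ⟪H s, s⟫) t := by
      have h2 := (((hφ' t).sub_const (f x)).sub ((hasDerivAt_id t).mul_const ⟪G 0, s⟫)).sub
        (((hasDerivAt_pow 2 t).div_const 2).mul_const ⟪H s, s⟫)
      exact h2.congr_deriv (by norm_num)
    convert h1 using 1
    simp [hwdef, inner_sub_left, inner_smul_left]
  have hebound : |e 1| ≤ L₂ * ‖s‖ ^ 3 / 6 := by
    have hB : ∀ t : ℝ, HasDerivAt (fun t => L₂ * ‖s‖ ^ 3 * t ^ 3 / 6)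
        (L₂ * ‖s‖ ^ 3 * t ^ 2 / 2) t := by
      intro t
      have := ((hasDerivAt_pow 3 t).const_mul (L₂ * ‖s‖ ^ 3)).div_const 6
      exact this.congr_deriv (by norm_num; ring)
    have h0 : ‖e 0‖ ≤ L₂ * ‖s‖ ^ 3 * (0:ℝ) ^ 3 / 6 := by simp [hedef]
    have bound : ∀ t ∈ Ico (0:ℝ) 1, ‖(⟪w t, s⟫ : ℝ)‖ ≤ L₂ * ‖s‖ ^ 3 * t ^ 2 / 2 := by
      intro t ht
      have h1 : ‖(⟪w t, s⟫ : ℝ)‖ ≤ ‖w t‖ * ‖s‖ := norm_inner_le_norm _ _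
      have h2 := hwbound t ⟨ht.1, ht.2.le⟩
      calc ‖(⟪w t, s⟫ : ℝ)‖ ≤ (L₂ * ‖s‖ ^ 2 * t ^ 2 / 2) * ‖s‖ :=
            h1.trans (mul_le_mul_of_nonneg_right h2 (norm_nonneg s))
        _ = L₂ * ‖s‖ ^ 3 * t ^ 2 / 2 := by ring
    have := image_norm_le_of_norm_deriv_right_le_deriv_boundary
      (fun u _ => (he' u).continuousAt.continuousWithinAt)
      (fun u _ => (he' u).hasDerivWithinAt) h0 hB bound (right_mem_Icc.mpr zero_le_one)
    simpa using this
  -- step 3: identify e 1 with f(x+s) - T s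
  have hTs : T s = f x + ⟪G 0, s⟫ + 1 / 2 * ⟪H s, s⟫ := by
    rw [hT s]
    congr 2
    · simp [hGdef]
    · rw [real_inner_comm]
  have he1 : e 1 = f (x + s) - T s := by
    simp only [hedef, hTs, one_smul, one_pow]
    ring
  -- final arithmetic
  have hT0 : T 0 = f x := by simp [hT 0]
  have hsnorm : (0:ℝ) < ‖s‖ := norm_pos_iff.mpr hs
  have hDpos : 0 < T 0 - T s := lt_of_lt_of_le (by positivity) hdec
  have key : |(f x - f (x + s)) / (T 0 - T s) - 1| = |e 1| / (T 0 - T s) := by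
    rw [div_sub_one hDpos.ne', abs_div, abs_of_pos hDpos, he1]
    rw [abs_sub_comm]
    congr 1
    rw [hT0]
    ring_nf
  rw [key]
  have h1 : |e 1| / (T 0 - T s) ≤ (L₂ * ‖s‖ ^ 3 / 6) / ((1 / 2) * σ * r * ‖s‖ ^ 2) :=
    div_le_div₀ (by positivity) hebound (by positivity) hdec
  refine h1.trans (le_of_eq ?_)
  field_simp
  ring
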